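/- arXiv:2204.02517 — 3 statements merged into one kernel-verified Lean document; each statement's English description precedes it below -/
import Mathlib

section
/- Let b ∈ (0,1). For every bounded measurable function h : ℝ → ℂ with 𝒟^b h bounded, and every f ∈ L²(ℝ), one has ‖𝒟^b(h f)‖_{L²(ℝ)} ≤ ‖𝒟^b h‖_{L^∞(ℝ)} ‖f‖_{L²(ℝ)} + ‖h‖_{L^∞(ℝ)} ‖𝒟^b f‖_{L²(ℝ)} (as an inequality in the extended reals). -/
open MeasureTheory Complex ENNReal NNReal

noncomputable section

/-- Fourier transform `f̂(ξ) = ∫ f(x) e^{-i x ξ} dx`. -/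
def ftransform (f : ℝ → ℂ) (ξ : ℝ) : ℂ :=
  ∫ x : ℝ, f x * Complex.exp (-(Complex.I) * x * ξ)

/-- Inverse Fourier transform. -/
def invFtransform (g : ℝ → ℂ) (x : ℝ) : ℂ :=
  ((1 / (2 * Real.pi) : ℝ) : ℂ) * ∫ ξ : ℝ, g ξ * Complex.exp (Complex.I * x * ξ)

/-- Bessel potential `J^s`, defined via `(J^s f)^(ξ) = (1+ξ²)^{s/2} f̂(ξ)`. -/
def bessel (s : ℝ) (f : ℝ → ℂ) : ℝ → ℂ :=
  invFtransform (fun ξ => (((1 + ξ ^ 2) ^ (s / 2) : ℝ) : ℂ) * ftransform f ξ)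

/-- Riesz potential `D^s`, defined via `(D^s f)^(ξ) = |ξ|^s f̂(ξ)`. -/
def riesz (s : ℝ) (f : ℝ → ℂ) : ℝ → ℂ :=
  invFtransform (fun ξ => ((|ξ| ^ s : ℝ) : ℂ) * ftransform f ξ)

/-- Hilbert transform, defined via `(ℋ f)^(ξ) = -i sgn(ξ) f̂(ξ)`. -/
def hilbert (f : ℝ → ℂ) : ℝ → ℂ :=
  invFtransform (fun ξ => -(Complex.I) * ((Real.sign ξ : ℝ) : ℂ) * ftransform f ξ)

/-- Unitary group `U(t)` of the linear DGBO equation: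
`(U(t)φ)^(ξ) = e^{-i t ξ |ξ|^{1+a}} φ̂(ξ)`. -/
def Ugrp (a t : ℝ) (φ : ℝ → ℂ) : ℝ → ℂ :=
  invFtransform (fun ξ =>
    Complex.exp (-(Complex.I) * t * ξ * ((|ξ| ^ (1 + a) : ℝ) : ℂ)) * ftransform φ ξ)

/-- Japanese bracket weight `⟨x⟩^r = (1+x²)^{r/2}`. -/
def jweight (r x : ℝ) : ℝ := (1 + x ^ 2) ^ (r / 2)

/-- Stein derivative `𝒟^b g(x) = (∫ |g(x)-g(y)|²/|x-y|^{1+2b} dy)^{1/2}`, valued in `ℝ≥0∞`. -/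
def steinDeriv (b : ℝ) (g : ℝ → ℂ) (x : ℝ) : ℝ≥0∞ :=
  (∫⁻ y : ℝ, ENNReal.ofReal (‖g x - g y‖ ^ 2 / |x - y| ^ (1 + 2 * b))) ^ ((1:ℝ)/2)

/-- `L²` norm of the Stein derivative (in the extended reals). -/
def steinL2 (b : ℝ) (g : ℝ → ℂ) : ℝ≥0∞ :=
  (∫⁻ x : ℝ, steinDeriv b g x ^ (2:ℝ)) ^ ((1:ℝ)/2)

private lemma wMeas (b x : ℝ) :
    Measurable (fun y : ℝ => (ENNReal.ofReal (|x - y| ^ (1 + 2 * b)))⁻¹) :=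
  (ENNReal.measurable_ofReal.comp
    (((measurable_const.sub measurable_id).abs).pow measurable_const)).inv

private lemma ae_ne (x : ℝ) : ∀ᵐ y : ℝ ∂(volume), y ≠ x := by
  have : (volume : Measure ℝ) {x} = 0 := measure_singleton x
  rw [ae_iff]
  simpa [Set.setOf_eq_eq_singleton] using this

private lemma steinDeriv_eq_withDensity (b : ℝ) (g : ℝ → ℂ) (x : ℝ) :
    steinDeriv b g x
      = (∫⁻ y, ((‖g x - g y‖₊ : ℝ≥0∞)) ^ (2:ℝ)
          ∂((volume : Measure ℝ).withDensity
             (fun y => (ENNReal.ofReal (|x - y| ^ (1 + 2 * b)))⁻¹))) ^ ((1:ℝ)/2) := by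
  rw [lintegral_withDensity_eq_lintegral_mul_non_measurable _ (wMeas b x) ?fin]
  case fin =>
    filter_upwards [ae_ne x] with y hy
    have hd : (0:ℝ) < |x - y| ^ (1 + 2 * b) :=
      Real.rpow_pos_of_pos (abs_pos.2 (sub_ne_zero.2 (Ne.symm hy))) _
    simp [ENNReal.inv_lt_top, ENNReal.ofReal_pos, hd]
  unfold steinDeriv
  congr 1
  apply lintegral_congr_ae
  filter_upwards [ae_ne x] with y hy
  have hd : (0:ℝ) < |x - y| ^ (1 + 2 * b) :=
    Real.rpow_pos_of_pos (abs_pos.2 (sub_ne_zero.2 (Ne.symm hy))) _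
  have h2 : ENNReal.ofReal (‖g x - g y‖ ^ 2) = (‖g x - g y‖₊ : ℝ≥0∞) ^ (2:ℝ) := by
    rw [ENNReal.ofReal_pow (norm_nonneg _), ofReal_norm_eq_enorm,
      ← ENNReal.rpow_natCast]
    norm_num
    rfl
  rw [ENNReal.ofReal_div_of_pos hd, h2]
  simp [ENNReal.div_eq_inv_mul]

private lemma steinDeriv_congr {f f' : ℝ → ℂ} (hff' : f =ᵐ[volume] f') (b : ℝ) :
    steinDeriv b f =ᵐ[volume] steinDeriv b f' := by
  filter_upwards [hff'] with x hx
  unfold steinDeriv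
  congr 1
  apply lintegral_congr_ae
  filter_upwards [hff'] with y hy
  rw [hx, hy]

private lemma steinDeriv_measurable {g : ℝ → ℂ} (hg : Measurable g) (b : ℝ) :
    Measurable (steinDeriv b g) := by
  apply Measurable.pow _ measurable_const
  apply Measurable.lintegral_prod_right (f := fun x y =>
    ENNReal.ofReal (‖g x - g y‖ ^ 2 / |x - y| ^ (1 + 2 * b)))
  apply ENNReal.measurable_ofReal.comp
  exact (((hg.comp measurable_fst).sub (hg.comp measurable_snd)).norm.pow_const 2).div
    ((measurable_fst.sub measurable_snd).abs.pow measurable_const)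

private lemma stein_pointwise (b : ℝ) {h f : ℝ → ℂ} (hmeas : Measurable h)
    (hfm : AEMeasurable f volume) (x : ℝ) :
    steinDeriv b (fun y => h y * f y) x ≤
      (‖f x‖₊ : ℝ≥0∞) * steinDeriv b h x + eLpNorm h ⊤ volume * steinDeriv b f x := by
  set ν : Measure ℝ :=
    (volume : Measure ℝ).withDensity (fun y => (ENNReal.ofReal (|x - y| ^ (1 + 2 * b)))⁻¹)
    with hν
  have hac : ν ≪ (volume : Measure ℝ) := withDensity_absolutelyContinuous _ _
  set C : ℝ≥0∞ := eLpNorm h ⊤ volume with hCdef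
  set u1 : ℝ → ℝ≥0∞ := fun y => (‖f x‖₊ : ℝ≥0∞) * (‖h x - h y‖₊ : ℝ≥0∞) with hu1
  set u2 : ℝ → ℝ≥0∞ := fun y => C * (‖f x - f y‖₊ : ℝ≥0∞) with hu2
  have hhvol : ∀ᵐ y ∂(volume : Measure ℝ), (‖h y‖₊ : ℝ≥0∞) ≤ C := by
    rw [hCdef, eLpNorm_exponent_top]
    exact enorm_ae_le_eLpNormEssSup h volume
  have hhle : ∀ᵐ y ∂ν, (‖h y‖₊ : ℝ≥0∞) ≤ C := hhvol.filter_mono hac.ae_le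
  have key : ∀ᵐ y ∂ν, (‖h x * f x - h y * f y‖₊ : ℝ≥0∞) ≤ u1 y + u2 y := by
    filter_upwards [hhle] with y hy
    have hid : h x * f x - h y * f y = (h x - h y) * f x + h y * (f x - f y) := by ring
    rw [hid]
    calc ((‖(h x - h y) * f x + h y * (f x - f y)‖₊ : ℝ≥0∞))
        ≤ (‖(h x - h y) * f x‖₊ : ℝ≥0∞) + (‖h y * (f x - f y)‖₊ : ℝ≥0∞) := by
          exact_mod_cast nnnorm_add_le _ _
      _ = (‖f x‖₊ : ℝ≥0∞) * (‖h x - h y‖₊ : ℝ≥0∞)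
            + (‖h y‖₊ : ℝ≥0∞) * (‖f x - f y‖₊ : ℝ≥0∞) := by
          push_cast [nnnorm_mul]; ring
      _ ≤ u1 y + u2 y := add_le_add le_rfl (mul_le_mul_left hy _)
  have m1 : AEMeasurable u1 ν :=
    (((measurable_const.sub hmeas).enorm).const_mul _).aemeasurable
  have hfν : AEMeasurable f ν := hfm.mono_ac hac
  have m2 : AEMeasurable u2 ν := ((aemeasurable_const.sub hfν).enorm).const_mul _
  have mink := ENNReal.lintegral_Lp_add_le (μ := ν) m1 m2 (by norm_num : (1:ℝ) ≤ 2)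
  have step1 : steinDeriv b (fun y => h y * f y) x
      ≤ (∫⁻ y, (u1 y + u2 y) ^ (2:ℝ) ∂ν) ^ ((1:ℝ)/2) := by
    rw [steinDeriv_eq_withDensity]
    refine ENNReal.rpow_le_rpow ?_ (by norm_num)
    refine lintegral_mono_ae ?_
    filter_upwards [key] with y hy
    exact ENNReal.rpow_le_rpow hy (by norm_num)
  have t1 : (∫⁻ y, u1 y ^ (2:ℝ) ∂ν) ^ ((1:ℝ)/2)
      = (‖f x‖₊ : ℝ≥0∞) * steinDeriv b h x := by
    simp_rw [hu1, ENNReal.mul_rpow_of_nonneg _ _ (by norm_num : (0:ℝ) ≤ 2)]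
    rw [lintegral_const_mul' _ _ (ENNReal.rpow_ne_top_of_nonneg (by norm_num) ENNReal.coe_ne_top),
      ENNReal.mul_rpow_of_nonneg _ _ (by norm_num : (0:ℝ) ≤ 1/2),
      ← ENNReal.rpow_mul, steinDeriv_eq_withDensity]
    norm_num
    rfl
  have t2 : (∫⁻ y, u2 y ^ (2:ℝ) ∂ν) ^ ((1:ℝ)/2) = C * steinDeriv b f x := by
    simp_rw [hu2, ENNReal.mul_rpow_of_nonneg _ _ (by norm_num : (0:ℝ) ≤ 2)]
    rw [lintegral_const_mul'' (f := fun y => (‖f x - f y‖₊ : ℝ≥0∞) ^ (2:ℝ)) _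
      (((aemeasurable_const.sub hfν).enorm).pow aemeasurable_const),
      ENNReal.mul_rpow_of_nonneg _ _ (by norm_num : (0:ℝ) ≤ 1/2),
      ← ENNReal.rpow_mul, steinDeriv_eq_withDensity]
    norm_num
    rfl
  calc steinDeriv b (fun y => h y * f y) x
      ≤ (∫⁻ y, (u1 y + u2 y) ^ (2:ℝ) ∂ν) ^ ((1:ℝ)/2) := step1
    _ ≤ (∫⁻ y, u1 y ^ (2:ℝ) ∂ν) ^ ((1:ℝ)/2) + (∫⁻ y, u2 y ^ (2:ℝ) ∂ν) ^ ((1:ℝ)/2) := mink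
    _ = _ := by rw [t1, t2]

/-- Lemma \eqref{Leibh}: for `b ∈ (0,1)`, a bounded measurable `h` with
`𝒟^b h` bounded and `f ∈ L²`,
`‖𝒟^b(h f)‖_{L²} ≤ ‖𝒟^b h‖_{L^∞} ‖f‖_{L²} + ‖h‖_{L^∞} ‖𝒟^b f‖_{L²}`. -/
theorem stein_deriv_product_estimate (b : ℝ) (hb : b ∈ Set.Ioo (0:ℝ) 1)
    (h f : ℝ → ℂ) (hmeas : Measurable h)
    (hbdd : ∃ M : ℝ, ∀ x : ℝ, ‖h x‖ ≤ M)
    (hDbdd : ∃ M : ℝ≥0∞, M ≠ ⊤ ∧ ∀ x : ℝ, steinDeriv b h x ≤ M)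
    (hf : MemLp f 2 volume) :
    steinL2 b (fun x : ℝ => h x * f x) ≤
      essSup (steinDeriv b h) volume * eLpNorm f 2 volume +
        eLpNorm h ⊤ volume * steinL2 b f := by
  obtain ⟨M, hM⟩ := hbdd
  obtain ⟨MD, hMDne, hMD⟩ := hDbdd
  have hfm : AEMeasurable f volume := hf.1.aemeasurable
  set C : ℝ≥0∞ := eLpNorm h ⊤ volume with hCdef
  have hC : C ≠ ⊤ :=
    (memLp_top_of_bound hmeas.aestronglyMeasurable M (Filter.Eventually.of_forall hM)).2.ne
  set S : ℝ≥0∞ := essSup (steinDeriv b h) volume with hSdef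
  have hSne : S ≠ ⊤ :=
    ne_top_of_le_ne_top hMDne (essSup_le_of_ae_le _ (Filter.Eventually.of_forall hMD))
  obtain ⟨f', hf'meas, hff'⟩ := id hfm
  have hDf_meas : AEMeasurable (steinDeriv b f) volume :=
    ((steinDeriv_measurable hf'meas b).aemeasurable).congr (steinDeriv_congr hff' b).symm
  have hDh_meas : Measurable (steinDeriv b h) := steinDeriv_measurable hmeas b
  set A : ℝ → ℝ≥0∞ := fun x => (‖f x‖₊ : ℝ≥0∞) * steinDeriv b h x with hA
  set B : ℝ → ℝ≥0∞ := fun x => C * steinDeriv b f x with hB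
  have hAm : AEMeasurable A volume := (hfm.enorm).mul hDh_meas.aemeasurable
  have hBm : AEMeasurable B volume := hDf_meas.const_mul _
  have mink := ENNReal.lintegral_Lp_add_le (μ := (volume : Measure ℝ)) hAm hBm
    (by norm_num : (1:ℝ) ≤ 2)
  have step1 : steinL2 b (fun x : ℝ => h x * f x)
      ≤ (∫⁻ x, (A x + B x) ^ (2:ℝ)) ^ ((1:ℝ)/2) := by
    refine ENNReal.rpow_le_rpow (lintegral_mono fun x => ?_) (by norm_num)
    exact ENNReal.rpow_le_rpow (stein_pointwise b hmeas hfm x) (by norm_num)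
  have t1 : (∫⁻ x, A x ^ (2:ℝ)) ^ ((1:ℝ)/2) ≤ S * eLpNorm f 2 volume := by
    have hax : ∀ᵐ x ∂(volume : Measure ℝ),
        A x ^ (2:ℝ) ≤ S ^ (2:ℝ) * (‖f x‖₊ : ℝ≥0∞) ^ (2:ℝ) := by
      filter_upwards [ae_le_essSup (steinDeriv b h)] with x hx
      rw [hA, ENNReal.mul_rpow_of_nonneg _ _ (by norm_num : (0:ℝ) ≤ 2), mul_comm]
      exact mul_le_mul_left (ENNReal.rpow_le_rpow hx (by norm_num)) _
    calc (∫⁻ x, A x ^ (2:ℝ)) ^ ((1:ℝ)/2)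
        ≤ (∫⁻ x, S ^ (2:ℝ) * (‖f x‖₊ : ℝ≥0∞) ^ (2:ℝ)) ^ ((1:ℝ)/2) :=
          ENNReal.rpow_le_rpow (lintegral_mono_ae hax) (by norm_num)
      _ = S * eLpNorm f 2 volume := by
          rw [lintegral_const_mul' _ _ (ENNReal.rpow_ne_top_of_nonneg (by norm_num) hSne),
            ENNReal.mul_rpow_of_nonneg _ _ (by norm_num : (0:ℝ) ≤ 1/2),
            ← ENNReal.rpow_mul,
            eLpNorm_eq_lintegral_rpow_enorm_toReal (by norm_num) (by norm_num)]
          norm_num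
          rfl
  have t2 : (∫⁻ x, B x ^ (2:ℝ)) ^ ((1:ℝ)/2) = C * steinL2 b f := by
    simp_rw [hB, ENNReal.mul_rpow_of_nonneg _ _ (by norm_num : (0:ℝ) ≤ 2)]
    rw [lintegral_const_mul' _ _ (ENNReal.rpow_ne_top_of_nonneg (by norm_num) hC),
      ENNReal.mul_rpow_of_nonneg _ _ (by norm_num : (0:ℝ) ≤ 1/2),
      ← ENNReal.rpow_mul]
    norm_num [steinL2]
  calc steinL2 b (fun x : ℝ => h x * f x)
      ≤ (∫⁻ x, (A x + B x) ^ (2:ℝ)) ^ ((1:ℝ)/2) := step1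
    _ ≤ (∫⁻ x, A x ^ (2:ℝ)) ^ ((1:ℝ)/2) + (∫⁻ x, B x ^ (2:ℝ)) ^ ((1:ℝ)/2) := mink
    _ ≤ S * eLpNorm f 2 volume + C * steinL2 b f := add_le_add t1 (le_of_eq t2)
end
end

section
/- Let a ∈ (0,1) and b ∈ (0,1). There exists a constant C > 0 (depending only on a and b) such that for every t > 0 and every x ∈ ℝ, the Stein derivative of the function y ↦ e^{−i t y |y|^{1+a}} satisfies 𝒟^b(e^{−i t (·) |·|^{1+a}})(x) ≤ C ( t^{b/(2+a)} + t^b |x|^{(1+a)b} ). -/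
open MeasureTheory Complex ENNReal NNReal

open Set MeasureTheory Complex
open scoped ENNReal NNReal

section AuxLemmas


lemma aux_norm_exp_I_sub_one (θ : ℝ) : ‖Complex.exp (θ * Complex.I) - 1‖ ≤ |θ| := by
  have hz : Complex.exp (θ * Complex.I) - 1
      = ((Real.cos θ - 1 : ℝ) : ℂ) + ((Real.sin θ : ℝ) : ℂ) * Complex.I := by
    rw [Complex.exp_mul_I]
    push_cast
    ring
  have h2 : ‖Complex.exp (θ * Complex.I) - 1‖ ^ 2 = (Real.cos θ - 1) ^ 2 + Real.sin θ ^ 2 := by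
    rw [hz, Complex.sq_norm, Complex.normSq_add_mul_I]
  have hcos := Real.one_sub_sq_div_two_le_cos (x := θ)
  have hsc := Real.sin_sq_add_cos_sq θ
  have hsq : ‖Complex.exp (θ * Complex.I) - 1‖ ^ 2 ≤ θ ^ 2 := by
    rw [h2]; nlinarith
  calc ‖Complex.exp (θ * Complex.I) - 1‖
      = Real.sqrt (‖Complex.exp (θ * Complex.I) - 1‖ ^ 2) := by
        rw [Real.sqrt_sq (norm_nonneg _)]
    _ ≤ Real.sqrt (θ ^ 2) := Real.sqrt_le_sqrt hsq
    _ = |θ| := Real.sqrt_sq_eq_abs θ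

lemma aux_norm_exp_I_sub_exp_I (α β : ℝ) :
    ‖Complex.exp (α * Complex.I) - Complex.exp (β * Complex.I)‖ ≤ |α - β| := by
  have hz : Complex.exp (α * Complex.I) - Complex.exp (β * Complex.I)
      = Complex.exp (β * Complex.I) * (Complex.exp (((α - β : ℝ) : ℂ) * Complex.I) - 1) := by
    rw [mul_sub, ← Complex.exp_add]
    push_cast
    ring_nf
  rw [hz, norm_mul]
  have h1 : ‖Complex.exp (β * Complex.I)‖ = 1 := by
    rw [Complex.norm_exp]
    simp
  rw [h1, one_mul]
  exact aux_norm_exp_I_sub_one (α - β)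

lemma aux_rpow_sub_rpow {p : ℝ} (hp : 1 ≤ p) {A B : ℝ} (hA : 0 ≤ A) (hB : 0 ≤ B) :
    |A ^ p - B ^ p| ≤ p * max A B ^ (p - 1) * |A - B| := by
  set M := max A B with hM
  have hMnn : 0 ≤ M := le_trans hA (le_max_left _ _)
  have key : ∀ z ∈ Icc (0:ℝ) M, HasDerivWithinAt (fun y : ℝ => y ^ p)
      (p * z ^ (p - 1)) (Icc 0 M) z := fun z _ =>
    (Real.hasDerivAt_rpow_const (Or.inr hp)).hasDerivWithinAt
  have bound : ∀ z ∈ Icc (0:ℝ) M, ‖p * z ^ (p - 1)‖ ≤ p * M ^ (p - 1) := by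
    intro z hz
    rw [Real.norm_eq_abs, abs_mul, _root_.abs_of_nonneg (by linarith : (0:ℝ) ≤ p),
      _root_.abs_of_nonneg (Real.rpow_nonneg hz.1 _)]
    have := Real.rpow_le_rpow hz.1 hz.2 (by linarith : (0:ℝ) ≤ p - 1)
    nlinarith
  have := (convex_Icc (0:ℝ) M).norm_image_sub_le_of_norm_hasDerivWithin_le key bound
    (x := B) (y := A) ⟨hB, le_max_right _ _⟩ ⟨hA, le_max_left _ _⟩
  simpa [Real.norm_eq_abs] using this


lemma aux_psi_diff {s : ℝ} (hs1 : 1 ≤ s) (x y : ℝ) :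
    |x * |x| ^ s - y * |y| ^ s| ≤ (1 + s) * max |x| |y| ^ s * |x - y| := by
  set M := max |x| |y| with hM
  have hMnn : 0 ≤ M := le_trans (abs_nonneg x) (le_max_left _ _)
  have hxM : |x| ≤ M := le_max_left _ _
  have hyM : |y| ≤ M := le_max_right _ _
  have key : x * |x| ^ s - y * |y| ^ s = (x - y) * |x| ^ s + y * (|x| ^ s - |y| ^ s) := by ring
  have h1 : |(x - y) * |x| ^ s| ≤ |x - y| * M ^ s := by
    rw [abs_mul, _root_.abs_of_nonneg (Real.rpow_nonneg (abs_nonneg x) s)]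
    exact mul_le_mul_of_nonneg_left
      (Real.rpow_le_rpow (abs_nonneg x) hxM (by linarith)) (abs_nonneg _)
  have h2 : |y * (|x| ^ s - |y| ^ s)| ≤ s * M ^ s * |x - y| := by
    rw [abs_mul]
    have hd := aux_rpow_sub_rpow hs1 (abs_nonneg x) (abs_nonneg y)
    have habs : |(|x| - |y|)| ≤ |x - y| := abs_abs_sub_abs_le_abs_sub x y
    rcases eq_or_lt_of_le hMnn with hM0 | hM0
    · have hx0 : |x| = 0 := le_antisymm (hM0 ▸ hxM) (abs_nonneg x)
      have hy0 : |y| = 0 := le_antisymm (hM0 ▸ hyM) (abs_nonneg y)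
      rw [hx0, hy0]
      simp
      positivity
    · have hMs : M ^ (s - 1) * M = M ^ s := by
        nth_rewrite 2 [← Real.rpow_one M]
        rw [← Real.rpow_add hM0]
        norm_num
      calc |y| * |(|x| ^ s - |y| ^ s)|
          ≤ M * (s * M ^ (s - 1) * |(|x| - |y|)|) :=
            mul_le_mul hyM hd (abs_nonneg _) hMnn
        _ ≤ M * (s * M ^ (s - 1) * |x - y|) := by
            have hnn : 0 ≤ s * M ^ (s - 1) := by positivity
            exact mul_le_mul_of_nonneg_left (mul_le_mul_of_nonneg_left habs hnn) hMnn
        _ = s * (M ^ (s - 1) * M) * |x - y| := by ring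
        _ = s * M ^ s * |x - y| := by rw [hMs]
  calc |x * |x| ^ s - y * |y| ^ s|
      ≤ |(x - y) * |x| ^ s| + |y * (|x| ^ s - |y| ^ s)| := by
        rw [key]; exact abs_add_le _ _
    _ ≤ |x - y| * M ^ s + s * M ^ s * |x - y| := add_le_add h1 h2
    _ = (1 + s) * M ^ s * |x - y| := by ring

lemma aux_add_rpow_le {s : ℝ} (hs0 : 0 ≤ s) (hs2 : s ≤ 2) {u v : ℝ} (hu : 0 ≤ u) (hv : 0 ≤ v) :
    (u + v) ^ s ≤ 4 * (u ^ s + v ^ s) := by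
  have h1 : (u + v) ^ s ≤ (2 * max u v) ^ s := by
    apply Real.rpow_le_rpow (by linarith) _ hs0
    rcases le_total u v with h | h
    · rw [max_eq_right h]; linarith
    · rw [max_eq_left h]; linarith
  have h2 : (2 * max u v) ^ s = 2 ^ s * max u v ^ s :=
    Real.mul_rpow (by norm_num) (le_trans hu (le_max_left _ _))
  have h3 : (2:ℝ) ^ s ≤ 4 := by
    calc (2:ℝ) ^ s ≤ 2 ^ (2:ℝ) := Real.rpow_le_rpow_of_exponent_le one_le_two hs2
      _ = 4 := by
        rw [show ((2:ℝ):ℝ) = ((2:ℕ):ℝ) by norm_num, Real.rpow_natCast]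
        norm_num
  have h4 : max u v ^ s ≤ u ^ s + v ^ s := by
    rcases max_cases u v with ⟨h, _⟩ | ⟨h, _⟩ <;> rw [h]
    · nlinarith [Real.rpow_nonneg hv s]
    · nlinarith [Real.rpow_nonneg hu s]
  calc (u + v) ^ s ≤ 2 ^ s * max u v ^ s := by rw [← h2]; exact h1
    _ ≤ 4 * (u ^ s + v ^ s) :=
        mul_le_mul h3 h4 (Real.rpow_nonneg (le_trans hu (le_max_left _ _)) s) (by norm_num)

lemma aux_lint_Ioc (c q ρ : ℝ) (hc : 0 ≤ c) (hq : -1 < q) (hρ : 0 < ρ) :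
    ∫⁻ u in Set.Ioc 0 ρ, ENNReal.ofReal (c * u ^ q)
      = ENNReal.ofReal (c * (ρ ^ (q + 1) / (q + 1))) := by
  have hint : IntegrableOn (fun u : ℝ => c * u ^ q) (Set.Ioc 0 ρ) := by
    have h := intervalIntegral.intervalIntegrable_rpow' (a := 0) (b := ρ) hq
    rw [intervalIntegrable_iff, uIoc_of_le hρ.le] at h
    exact h.const_mul c
  rw [← ofReal_integral_eq_lintegral_ofReal hint ?_]
  · congr 1
    rw [← intervalIntegral.integral_of_le hρ.le, intervalIntegral.integral_const_mul,
      integral_rpow (Or.inl hq), Real.zero_rpow (by linarith : q + 1 ≠ 0)]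
    ring
  · filter_upwards [ae_restrict_mem measurableSet_Ioc] with u hu
    exact mul_nonneg hc (Real.rpow_nonneg hu.1.le q)

lemma aux_lint_Ioi (c q ρ : ℝ) (hc : 0 ≤ c) (hq : q < -1) (hρ : 0 < ρ) :
    ∫⁻ u in Set.Ioi ρ, ENNReal.ofReal (c * u ^ q)
      = ENNReal.ofReal (c * (-ρ ^ (q + 1) / (q + 1))) := by
  have hint : IntegrableOn (fun u : ℝ => c * u ^ q) (Set.Ioi ρ) :=
    (integrableOn_Ioi_rpow_of_lt hq hρ).const_mul c
  rw [← ofReal_integral_eq_lintegral_ofReal hint ?_]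
  · congr 1
    rw [integral_const_mul, integral_Ioi_rpow_of_lt hq hρ]
  · filter_upwards [ae_restrict_mem measurableSet_Ioi] with u hu
    have hu0 : (0:ℝ) < u := lt_trans hρ hu
    exact mul_nonneg hc (Real.rpow_nonneg hu0.le q)

lemma aux_lint_neg_preimage {g : ℝ → ℝ≥0∞} (hg : Measurable g) (heven : ∀ u, g (-u) = g u)
    {S : Set ℝ} (hS : MeasurableSet S) :
    ∫⁻ u in Neg.neg ⁻¹' S, g u = ∫⁻ u in S, g u := by
  have h := (Measure.measurePreserving_neg (volume : Measure ℝ)).setLIntegral_comp_preimage hS hg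
  simp_rw [heven] at h
  exact h

lemma aux_translate (G : ℝ → ℝ≥0∞) (T : Set ℝ) (hT : MeasurableSet T) (x : ℝ) :
    ∫⁻ y in (fun y => y - x) ⁻¹' T, G (y - x) = ∫⁻ u in T, G u := by
  have hS : MeasurableSet ((fun y : ℝ => y - x) ⁻¹' T) :=
    (measurable_id.sub_const x) hT
  have h1 : ∀ y : ℝ, ((fun y : ℝ => y - x) ⁻¹' T).indicator (fun y => G (y - x)) y
      = T.indicator G (y - x) := by
    intro y
    by_cases h : y - x ∈ T <;> simp [Set.indicator, h, Set.mem_preimage]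
  calc ∫⁻ y in (fun y => y - x) ⁻¹' T, G (y - x)
      = ∫⁻ y, ((fun y : ℝ => y - x) ⁻¹' T).indicator (fun y => G (y - x)) y :=
        (lintegral_indicator hS _).symm
    _ = ∫⁻ y, T.indicator G (y - x) := by simp_rw [h1]
    _ = ∫⁻ u, T.indicator G u := lintegral_sub_right_eq_self (T.indicator G) x
    _ = ∫⁻ u in T, G u := lintegral_indicator hT _




lemma aux_arg_eq (t z : ℝ) (c : ℝ) :
    -(Complex.I) * t * z * ((c : ℝ) : ℂ) = (((-t * (z * c)) : ℝ) : ℂ) * Complex.I := by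
  push_cast
  ring

lemma aux_norm_g_le_two (t a x y : ℝ) :
    ‖Complex.exp (-(Complex.I) * t * x * ((|x| ^ (1 + a) : ℝ) : ℂ))
      - Complex.exp (-(Complex.I) * t * y * ((|y| ^ (1 + a) : ℝ) : ℂ))‖ ≤ 2 := by
  have h1 : ∀ z : ℝ, ‖Complex.exp (-(Complex.I) * t * z * ((|z| ^ (1 + a) : ℝ) : ℂ))‖ = 1 := by
    intro z
    rw [aux_arg_eq, Complex.norm_exp]
    simp
  calc ‖_ - _‖ ≤ ‖Complex.exp (-(Complex.I) * t * x * ((|x| ^ (1 + a) : ℝ) : ℂ))‖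
        + ‖Complex.exp (-(Complex.I) * t * y * ((|y| ^ (1 + a) : ℝ) : ℂ))‖ := norm_sub_le _ _
    _ ≤ 2 := by rw [h1 x, h1 y]; norm_num

lemma aux_norm_g_sub {a : ℝ} (ha0 : 0 < a) (ha1 : a < 1) {t : ℝ} (ht : 0 ≤ t) (x y : ℝ) :
    ‖Complex.exp (-(Complex.I) * t * x * ((|x| ^ (1 + a) : ℝ) : ℂ))
      - Complex.exp (-(Complex.I) * t * y * ((|y| ^ (1 + a) : ℝ) : ℂ))‖
      ≤ 12 * t * (|x| ^ (1 + a) + |x - y| ^ (1 + a)) * |x - y| := by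
  rw [aux_arg_eq t x, aux_arg_eq t y]
  refine (aux_norm_exp_I_sub_exp_I (-t * (x * |x| ^ (1 + a))) (-t * (y * |y| ^ (1 + a)))).trans ?_
  have habs : |(-t * (x * |x| ^ (1 + a))) - (-t * (y * |y| ^ (1 + a)))|
      = t * |x * |x| ^ (1 + a) - y * |y| ^ (1 + a)| := by
    rw [show (-t * (x * |x| ^ (1 + a))) - (-t * (y * |y| ^ (1 + a)))
        = -(t * (x * |x| ^ (1 + a) - y * |y| ^ (1 + a))) by ring, abs_neg, abs_mul,
      _root_.abs_of_nonneg ht]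
  rw [habs]
  have h2 := aux_psi_diff (s := 1 + a) (by linarith) x y
  have hMnn : (0:ℝ) ≤ max |x| |y| := le_trans (abs_nonneg x) (le_max_left _ _)
  have hle : max |x| |y| ≤ |x| + |x - y| := by
    apply max_le (le_add_of_nonneg_right (abs_nonneg _))
    calc |y| = |x + (y - x)| := by ring_nf
      _ ≤ |x| + |y - x| := abs_add_le _ _
      _ = |x| + |x - y| := by rw [abs_sub_comm]
  have hM : max |x| |y| ^ (1 + a) ≤ 4 * (|x| ^ (1 + a) + |x - y| ^ (1 + a)) :=
    le_trans (Real.rpow_le_rpow hMnn hle (by linarith))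
      (aux_add_rpow_le (by linarith) (by linarith) (abs_nonneg _) (abs_nonneg _))
  calc t * |x * |x| ^ (1 + a) - y * |y| ^ (1 + a)|
      ≤ t * ((1 + (1 + a)) * max |x| |y| ^ (1 + a) * |x - y|) :=
        mul_le_mul_of_nonneg_left h2 ht
    _ ≤ t * (3 * (4 * (|x| ^ (1 + a) + |x - y| ^ (1 + a))) * |x - y|) := by
        have h3 : (1 + (1 + a)) ≤ 3 := by linarith
        have hMp : (0:ℝ) ≤ max |x| |y| ^ (1 + a) := Real.rpow_nonneg hMnn _
        have h4 : (1 + (1 + a)) * max |x| |y| ^ (1 + a)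
            ≤ 3 * (4 * (|x| ^ (1 + a) + |x - y| ^ (1 + a))) :=
          mul_le_mul h3 hM hMp (by norm_num)
        exact mul_le_mul_of_nonneg_left
          (mul_le_mul_of_nonneg_right h4 (abs_nonneg _)) ht
    _ = 12 * t * (|x| ^ (1 + a) + |x - y| ^ (1 + a)) * |x - y| := by ring

end AuxLemmas

noncomputable section

/-- Lemma `Pontual1`: for `a, b ∈ (0,1)` there is `C > 0` such that for every
`t > 0` and `x ∈ ℝ`, `𝒟^b(e^{-it(·)|·|^{1+a}})(x) ≤ C (t^{b/(2+a)} + t^b |x|^{(1+a)b})`. -/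
theorem stein_deriv_phase_pointwise (a b : ℝ) (ha : a ∈ Set.Ioo (0:ℝ) 1)
    (hb : b ∈ Set.Ioo (0:ℝ) 1) :
    ∃ C : ℝ, 0 < C ∧ ∀ t : ℝ, 0 < t → ∀ x : ℝ,
      steinDeriv b (fun y : ℝ =>
          Complex.exp (-(Complex.I) * t * y * ((|y| ^ (1 + a) : ℝ) : ℂ))) x ≤
        ENNReal.ofReal (C * (t ^ (b / (2 + a)) + t ^ b * |x| ^ ((1 + a) * b))) := by
  obtain ⟨ha0, ha1⟩ := ha
  obtain ⟨hb0, hb1⟩ := hb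
  have h2b : 0 < 2 - 2 * b := by linarith
  set C2 : ℝ := 1152 / (2 - 2 * b) + 4 / b with hC2def
  have hC2 : 0 < C2 := by positivity
  refine ⟨4 * C2 ^ ((1:ℝ)/2), by positivity, ?_⟩
  intro t ht x
  set g : ℝ → ℂ := fun y : ℝ =>
    Complex.exp (-(Complex.I) * t * y * ((|y| ^ (1 + a) : ℝ) : ℂ)) with hgdef
  set D : ℝ := t ^ ((1:ℝ)/(2 + a)) + t * |x| ^ (1 + a) with hDdef
  have htpow : 0 < t ^ ((1:ℝ)/(2 + a)) := Real.rpow_pos_of_pos ht _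
  have hxnn : (0:ℝ) ≤ t * |x| ^ (1 + a) := by positivity
  have hD : 0 < D := by positivity
  set ρ : ℝ := D⁻¹ with hρdef
  have hρ : 0 < ρ := by positivity
  have hρD : ρ * D = 1 := inv_mul_cancel₀ hD.ne'
  set E : ℝ := 12 * t * (|x| ^ (1 + a) + ρ ^ (1 + a)) with hEdef
  have hE : 0 ≤ E := by positivity
  set F : ℝ → ℝ≥0∞ := fun y =>
    ENNReal.ofReal (‖g x - g y‖ ^ 2 / |x - y| ^ (1 + 2 * b)) with hFdef
  set G₁ : ℝ → ℝ≥0∞ := fun u => ENNReal.ofReal (E ^ 2 * |u| ^ (1 - 2 * b)) with hG1def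
  set G₂ : ℝ → ℝ≥0∞ := fun u => ENNReal.ofReal (4 * |u| ^ (-(1 + 2 * b))) with hG2def
  have hG1m : Measurable G₁ := by fun_prop
  have hG2m : Measurable G₂ := by fun_prop
  have hG1even : ∀ u, G₁ (-u) = G₁ u := by intro u; simp [hG1def, abs_neg]
  have hG2even : ∀ u, G₂ (-u) = G₂ u := by intro u; simp [hG2def, abs_neg]
  set T : Set ℝ := Icc (-ρ) ρ with hTdef
  have hT : MeasurableSet T := measurableSet_Icc
  set S : Set ℝ := (fun y : ℝ => y - x) ⁻¹' T with hSdef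
  have hS : MeasurableSet S := (measurable_id.sub_const x) hT
  -- pointwise bounds
  have hnear : ∀ y ∈ S, F y ≤ G₁ (y - x) := by
    intro y hy
    have hr : |x - y| ≤ ρ := by
      rw [abs_sub_comm]
      exact abs_le.2 (mem_preimage.1 hy)
    rcases eq_or_lt_of_le (abs_nonneg (x - y)) with h0 | h0
    · simp only [hFdef]
      rw [← h0, Real.zero_rpow (by linarith : (1:ℝ) + 2 * b ≠ 0), _root_.div_zero]
      simp
    · apply ENNReal.ofReal_le_ofReal
      rw [abs_sub_comm y x]
      have hEr : ‖g x - g y‖ ≤ E * |x - y| := by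
        refine (aux_norm_g_sub ha0 ha1 ht.le x y).trans ?_
        have : |x - y| ^ (1 + a) ≤ ρ ^ (1 + a) :=
          Real.rpow_le_rpow (abs_nonneg _) hr (by linarith)
        calc 12 * t * (|x| ^ (1 + a) + |x - y| ^ (1 + a)) * |x - y|
            ≤ 12 * t * (|x| ^ (1 + a) + ρ ^ (1 + a)) * |x - y| := by
              apply mul_le_mul_of_nonneg_right _ (abs_nonneg _)
              apply mul_le_mul_of_nonneg_left _ (by positivity)
              linarith
          _ = E * |x - y| := by rw [hEdef]
      calc ‖g x - g y‖ ^ 2 / |x - y| ^ (1 + 2 * b)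
          ≤ (E * |x - y|) ^ 2 / |x - y| ^ (1 + 2 * b) := by
            gcongr
        _ = E ^ 2 * (|x - y| ^ ((2:ℝ)) / |x - y| ^ (1 + 2 * b)) := by
            rw [Real.rpow_two]; ring
        _ = E ^ 2 * |x - y| ^ (1 - 2 * b) := by
            rw [← Real.rpow_sub h0, show (2:ℝ) - (1 + 2 * b) = 1 - 2 * b by ring]
  have hfar : ∀ y ∈ Sᶜ, F y ≤ G₂ (y - x) := by
    intro y hy
    have hr : ρ < |x - y| := by
      rw [abs_sub_comm]
      by_contra h
      push_neg at h
      exact hy (abs_le.1 h)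
    have h0 : 0 < |x - y| := lt_trans hρ hr
    apply ENNReal.ofReal_le_ofReal
    rw [abs_sub_comm y x]
    have h2 : ‖g x - g y‖ ^ 2 ≤ 4 := by
      have := aux_norm_g_le_two t a x y
      nlinarith [norm_nonneg (g x - g y)]
    calc ‖g x - g y‖ ^ 2 / |x - y| ^ (1 + 2 * b)
        ≤ 4 / |x - y| ^ (1 + 2 * b) := by gcongr
      _ = 4 * |x - y| ^ (-(1 + 2 * b)) := by
          rw [Real.rpow_neg h0.le, div_eq_mul_inv]
  -- splitting and translation
  have hFm : Measurable F := by fun_prop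
  have hsplit : ∫⁻ y, F y ≤ (∫⁻ u in T, G₁ u) + ∫⁻ u in Tᶜ, G₂ u := by
    rw [← lintegral_add_compl F hS]
    refine add_le_add ?_ ?_
    · calc ∫⁻ y in S, F y ≤ ∫⁻ y in S, G₁ (y - x) := setLIntegral_mono (by fun_prop) hnear
        _ = ∫⁻ u in T, G₁ u := aux_translate G₁ T hT x
    · calc ∫⁻ y in Sᶜ, F y ≤ ∫⁻ y in Sᶜ, G₂ (y - x) := setLIntegral_mono (by fun_prop) hfar
        _ = ∫⁻ u in Tᶜ, G₂ u := by
            rw [hSdef, ← preimage_compl]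
            exact aux_translate G₂ Tᶜ hT.compl x
  -- near integral
  have hneg1 : Ico (-ρ) 0 = Neg.neg ⁻¹' Ioc 0 ρ := by
    ext u
    simp only [mem_Ico, mem_preimage, mem_Ioc]
    constructor
    · rintro ⟨h1, h2⟩; constructor <;> linarith
    · rintro ⟨h1, h2⟩; constructor <;> linarith
  have hnear_int : ∫⁻ u in T, G₁ u
      ≤ 2 * ENNReal.ofReal (E ^ 2 * (ρ ^ (2 - 2 * b) / (2 - 2 * b))) := by
    have hIoc : ∫⁻ u in Ioc 0 ρ, G₁ u
        = ENNReal.ofReal (E ^ 2 * (ρ ^ (2 - 2 * b) / (2 - 2 * b))) := by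
      have hcong : ∫⁻ u in Ioc 0 ρ, G₁ u
          = ∫⁻ u in Ioc 0 ρ, ENNReal.ofReal (E ^ 2 * u ^ (1 - 2 * b)) := by
        apply setLIntegral_congr_fun measurableSet_Ioc
        intro u hu
        rw [hG1def]
        simp only
        rw [abs_of_pos hu.1]
      rw [hcong, aux_lint_Ioc (E^2) (1 - 2*b) ρ (by positivity) (by linarith) hρ,
        show (1 - 2*b) + 1 = 2 - 2*b by ring]
    have hIccIoc : ∫⁻ u in Icc 0 ρ, G₁ u = ∫⁻ u in Ioc 0 ρ, G₁ u :=
      setLIntegral_congr (MeasureTheory.Ioc_ae_eq_Icc).symm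
    calc ∫⁻ u in T, G₁ u ≤ ∫⁻ u in Ico (-ρ) 0 ∪ Icc 0 ρ, G₁ u := by
          apply lintegral_mono_set
          intro u hu
          rcases lt_or_ge u 0 with h | h
          · left; exact ⟨hu.1, h⟩
          · right; exact ⟨h, hu.2⟩
      _ ≤ (∫⁻ u in Ico (-ρ) 0, G₁ u) + ∫⁻ u in Icc 0 ρ, G₁ u := lintegral_union_le _ _ _
      _ = (∫⁻ u in Ioc 0 ρ, G₁ u) + ∫⁻ u in Ioc 0 ρ, G₁ u := by
          rw [hneg1, aux_lint_neg_preimage hG1m hG1even measurableSet_Ioc, hIccIoc]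
      _ = 2 * ENNReal.ofReal (E ^ 2 * (ρ ^ (2 - 2 * b) / (2 - 2 * b))) := by
          rw [hIoc]; exact (two_mul _).symm
  -- far integral
  have hneg2 : Iio (-ρ) = Neg.neg ⁻¹' Ioi ρ := by
    ext u
    simp only [mem_Iio, mem_preimage, mem_Ioi]
    constructor <;> intro h <;> linarith
  have hfar_int : ∫⁻ u in Tᶜ, G₂ u ≤ 2 * ENNReal.ofReal (4 * (ρ ^ (-(2*b)) / (2 * b))) := by
    have hIoi : ∫⁻ u in Ioi ρ, G₂ u = ENNReal.ofReal (4 * (ρ ^ (-(2*b)) / (2 * b))) := by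
      rw [hG2def]
      have hcong : ∫⁻ u in Ioi ρ, ENNReal.ofReal (4 * |u| ^ (-(1 + 2 * b)))
          = ∫⁻ u in Ioi ρ, ENNReal.ofReal (4 * u ^ (-(1 + 2 * b))) := by
        apply setLIntegral_congr_fun measurableSet_Ioi
        intro u hu
        show ENNReal.ofReal (4 * |u| ^ (-(1 + 2 * b))) = ENNReal.ofReal (4 * u ^ (-(1 + 2 * b)))
        rw [abs_of_pos (lt_trans hρ hu)]
      rw [hcong, aux_lint_Ioi 4 (-(1 + 2*b)) ρ (by norm_num) (by linarith) hρ,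
        show -(1 + 2*b) + 1 = -(2*b) by ring, neg_div_neg_eq]
    have hcompl : Tᶜ = Iio (-ρ) ∪ Ioi ρ := by
      rw [hTdef]
      ext u
      simp only [mem_compl_iff, mem_Icc, not_and_or, not_le, mem_union, mem_Iio, mem_Ioi]
    calc ∫⁻ u in Tᶜ, G₂ u = ∫⁻ u in Iio (-ρ) ∪ Ioi ρ, G₂ u := by rw [hcompl]
      _ ≤ (∫⁻ u in Iio (-ρ), G₂ u) + ∫⁻ u in Ioi ρ, G₂ u := lintegral_union_le _ _ _
      _ = (∫⁻ u in Ioi ρ, G₂ u) + ∫⁻ u in Ioi ρ, G₂ u := by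
          rw [hneg2, aux_lint_neg_preimage hG2m hG2even measurableSet_Ioi]
      _ = 2 * ENNReal.ofReal (4 * (ρ ^ (-(2*b)) / (2 * b))) := by
          rw [hIoi]; exact (two_mul _).symm
  -- assembling the real estimate
  have hD2b : (0:ℝ) ≤ D ^ (2 * b) := Real.rpow_nonneg hD.le _
  have hρ2b : ρ ^ (-(2 * b)) = D ^ (2 * b) := by
    rw [hρdef, Real.inv_rpow hD.le, Real.rpow_neg hD.le, inv_inv]
  have hsplit_exp : ρ ^ (2 - 2 * b) = ρ ^ 2 * D ^ (2 * b) := by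
    rw [show (2:ℝ) - 2 * b = 2 + -(2 * b) by ring, Real.rpow_add hρ, hρ2b, Real.rpow_two]
  have h2a : (0:ℝ) < 2 + a := by linarith
  have hDpow : t ≤ D ^ ((2:ℝ) + a) := by
    have h1 : (t ^ ((1:ℝ)/(2 + a))) ^ ((2:ℝ) + a) = t := by
      rw [← Real.rpow_mul ht.le, one_div_mul_cancel h2a.ne', Real.rpow_one]
    calc t = (t ^ ((1:ℝ)/(2 + a))) ^ ((2:ℝ) + a) := h1.symm
      _ ≤ D ^ ((2:ℝ) + a) :=
        Real.rpow_le_rpow htpow.le (le_add_of_nonneg_right hxnn) h2a.le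
  have htρ1 : t * ρ ^ ((2:ℝ) + a) ≤ 1 := by
    have hρ2a : ρ ^ ((2:ℝ) + a) = (D ^ ((2:ℝ) + a))⁻¹ := by
      rw [hρdef, Real.inv_rpow hD.le]
    rw [hρ2a, ← div_eq_mul_inv]
    exact div_le_one_of_le₀ hDpow (Real.rpow_nonneg hD.le _)
  have htρ : t * ρ ^ (1 + a) ≤ D := by
    have hsp : ρ ^ ((2:ℝ) + a) = ρ ^ (1 + a) * ρ := by
      rw [show (2:ℝ) + a = (1 + a) + 1 by ring, Real.rpow_add hρ, Real.rpow_one]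
    have h5 : t * ρ ^ (1 + a) * ρ ≤ D * ρ := by
      calc t * ρ ^ (1 + a) * ρ = t * ρ ^ ((2:ℝ) + a) := by rw [hsp]; ring
        _ ≤ 1 := htρ1
        _ = D * ρ := by rw [← hρD]; ring
    exact le_of_mul_le_mul_right h5 hρ
  have htx : t * |x| ^ (1 + a) ≤ D := le_add_of_nonneg_left htpow.le
  have hE24 : E ≤ 24 * D := by
    have hEeq : E = 12 * (t * |x| ^ (1 + a)) + 12 * (t * ρ ^ (1 + a)) := by
      rw [hEdef]; ring
    linarith
  have hEρ : E * ρ ≤ 24 := by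
    calc E * ρ ≤ 24 * D * ρ := mul_le_mul_of_nonneg_right hE24 hρ.le
      _ = 24 * (ρ * D) := by ring
      _ = 24 := by rw [hρD]; norm_num
  have hE2ρ2 : E ^ 2 * ρ ^ 2 ≤ 576 := by
    nlinarith [mul_nonneg hE hρ.le, hEρ]
  have htotal : ∫⁻ y, F y ≤ ENNReal.ofReal (C2 * D ^ (2 * b)) := by
    refine hsplit.trans ?_
    refine (add_le_add hnear_int hfar_int).trans ?_
    have hn1 : (0:ℝ) ≤ E ^ 2 * (ρ ^ (2 - 2 * b) / (2 - 2 * b)) :=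
      mul_nonneg (sq_nonneg _) (div_nonneg (Real.rpow_nonneg hρ.le _) h2b.le)
    have hn2 : (0:ℝ) ≤ 4 * (ρ ^ (-(2*b)) / (2 * b)) :=
      mul_nonneg (by norm_num) (div_nonneg (Real.rpow_nonneg hρ.le _) (by linarith))
    rw [two_mul (ENNReal.ofReal (E ^ 2 * (ρ ^ (2 - 2 * b) / (2 - 2 * b)))),
      two_mul (ENNReal.ofReal (4 * (ρ ^ (-(2*b)) / (2 * b)))),
      ← ENNReal.ofReal_add hn1 hn1, ← ENNReal.ofReal_add hn2 hn2,
      ← ENNReal.ofReal_add (by linarith) (by linarith)]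
    apply ENNReal.ofReal_le_ofReal
    have e1 : E ^ 2 * (ρ ^ (2 - 2 * b) / (2 - 2 * b)) ≤ 576 / (2 - 2 * b) * D ^ (2 * b) := by
      rw [hsplit_exp, show E ^ 2 * (ρ ^ 2 * D ^ (2 * b) / (2 - 2 * b))
          = E ^ 2 * ρ ^ 2 * D ^ (2 * b) / (2 - 2 * b) by ring,
        show (576:ℝ) / (2 - 2 * b) * D ^ (2 * b) = 576 * D ^ (2 * b) / (2 - 2 * b) by ring]
      gcongr ?_ / _
      exact mul_le_mul_of_nonneg_right hE2ρ2 hD2b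
    have e2 : 4 * (ρ ^ (-(2*b)) / (2 * b)) = 2 / b * D ^ (2 * b) := by
      rw [hρ2b]
      field_simp
      ring
    have e3 : C2 * D ^ (2 * b) = 1152 / (2 - 2 * b) * D ^ (2 * b) + (2 / b * D ^ (2 * b)
        + 2 / b * D ^ (2 * b)) := by
      rw [hC2def]; ring
    have e4 : (1152:ℝ) / (2 - 2 * b) * D ^ (2 * b) = 576 / (2 - 2 * b) * D ^ (2 * b)
        + 576 / (2 - 2 * b) * D ^ (2 * b) := by ring
    linarith
  -- conclusion
  have hC2b : (0:ℝ) < C2 * D ^ (2 * b) := mul_pos hC2 (Real.rpow_pos_of_pos hD _)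
  calc steinDeriv b g x = (∫⁻ y, F y) ^ ((1:ℝ)/2) := rfl
    _ ≤ (ENNReal.ofReal (C2 * D ^ (2 * b))) ^ ((1:ℝ)/2) :=
        ENNReal.rpow_le_rpow htotal (by norm_num)
    _ = ENNReal.ofReal ((C2 * D ^ (2 * b)) ^ ((1:ℝ)/2)) := ENNReal.ofReal_rpow_of_pos hC2b
    _ = ENNReal.ofReal (C2 ^ ((1:ℝ)/2) * D ^ b) := by
        rw [Real.mul_rpow hC2.le hD2b, ← Real.rpow_mul hD.le,
          show 2 * b * (1/2) = b by ring]
    _ ≤ ENNReal.ofReal (4 * C2 ^ ((1:ℝ)/2) * (t ^ (b / (2 + a)) + t ^ b * |x| ^ ((1 + a) * b))) := by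
        apply ENNReal.ofReal_le_ofReal
        have hDb : D ^ b ≤ 4 * (t ^ (b / (2 + a)) + t ^ b * |x| ^ ((1 + a) * b)) := by
          have h := aux_add_rpow_le hb0.le (by linarith : b ≤ 2) htpow.le hxnn
          have h1 : (t ^ ((1:ℝ)/(2 + a))) ^ b = t ^ (b / (2 + a)) := by
            rw [← Real.rpow_mul ht.le, show (1:ℝ)/(2 + a) * b = b / (2 + a) by ring]
          have h2 : (t * |x| ^ (1 + a)) ^ b = t ^ b * |x| ^ ((1 + a) * b) := by
            rw [Real.mul_rpow ht.le (Real.rpow_nonneg (abs_nonneg x) _),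
              ← Real.rpow_mul (abs_nonneg x)]
          rw [h1, h2] at h
          exact h
        calc C2 ^ ((1:ℝ)/2) * D ^ b
            ≤ C2 ^ ((1:ℝ)/2) * (4 * (t ^ (b / (2 + a)) + t ^ b * |x| ^ ((1 + a) * b))) :=
              mul_le_mul_of_nonneg_left hDb (Real.rpow_nonneg hC2.le _)
          _ = 4 * C2 ^ ((1:ℝ)/2) * (t ^ (b / (2 + a)) + t ^ b * |x| ^ ((1 + a) * b)) := by ring
end
end

section
/- Let a ∈ (0,1). There exists a constant C > 0 (depending only on a) such that for every σ : ℝ → ℝ with ⟨x⟩³ σ ∈ L²(ℝ), ∫_ℝ σ(x) dx = 0 and ∫_ℝ x σ(x) dx = 0, the function ξ ↦ |ξ|^{a−2} σ̂(ξ) belongs to L²(ℝ) and ‖ |ξ|^{a−2} σ̂ ‖_{L²(ℝ)} ≤ C ‖ ⟨x⟩³ σ ‖_{L²(ℝ)}. -/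
open MeasureTheory Complex ENNReal NNReal

noncomputable section

lemma aux18_norm_exp_mul (x ξ : ℝ) : ‖Complex.exp (-(Complex.I) * x * ξ)‖ = 1 := by
  have h : -(Complex.I) * x * ξ = ((-(x*ξ) : ℝ):ℂ) * Complex.I := by push_cast; ring
  rw [h, Complex.norm_exp_ofReal_mul_I]

lemma aux18_exp_taylor2 (θ : ℝ) :
    ‖Complex.exp (-(Complex.I) * θ) - 1 + Complex.I * θ‖ ≤ 3 * θ ^ 2 := by
  have key : Complex.exp (-(Complex.I) * θ) - 1 + Complex.I * θ
      = Complex.exp (-(Complex.I) * θ) - 1 - (-(Complex.I) * θ) := by ring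
  rw [key]
  rcases le_or_gt |θ| 1 with h | h
  · have habs : ‖(-(Complex.I) * θ : ℂ)‖ = |θ| := by
      simp
    have h2 := Complex.norm_exp_sub_one_sub_id_le (x := -(Complex.I) * θ) (by rw [habs]; exact h)
    rw [habs] at h2
    calc ‖Complex.exp (-(Complex.I) * θ) - 1 - -(Complex.I) * θ‖ ≤ |θ| ^ 2 := h2
    _ = θ ^ 2 := _root_.sq_abs θ
    _ ≤ 3 * θ ^ 2 := by nlinarith [sq_nonneg θ]
  · have h1 : ‖Complex.exp (-(Complex.I) * θ)‖ = 1 := by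
      have heq : -(Complex.I) * (θ:ℂ) = ((-θ : ℝ) : ℂ) * Complex.I := by push_cast; ring
      rw [heq, Complex.norm_exp_ofReal_mul_I]
    have h2 : ‖(-(Complex.I) * θ : ℂ)‖ = |θ| := by
      simp
    have hsq : 1 ≤ θ ^ 2 := by nlinarith [_root_.sq_abs θ]
    have habs : |θ| ≤ θ ^ 2 := by nlinarith [_root_.sq_abs θ, abs_nonneg θ]
    calc ‖Complex.exp (-(Complex.I) * θ) - 1 - -(Complex.I) * θ‖
        ≤ ‖Complex.exp (-(Complex.I) * θ) - 1‖ + ‖(-(Complex.I) * θ : ℂ)‖ := norm_sub_le _ _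
      _ ≤ ‖Complex.exp (-(Complex.I) * θ)‖ + ‖(1:ℂ)‖ + ‖(-(Complex.I) * θ : ℂ)‖ := by
          have := norm_sub_le (Complex.exp (-(Complex.I) * θ)) 1
          linarith
      _ = 2 + |θ| := by rw [h1, h2, norm_one]; ring
      _ ≤ 3 * θ ^ 2 := by nlinarith

lemma aux18_ft_continuous {f : ℝ → ℂ} (hf : Integrable f volume) :
    Continuous (ftransform f) := by
  apply continuous_of_dominated (bound := fun x => ‖f x‖)
  · intro ξ
    exact hf.aestronglyMeasurable.mul (Continuous.aestronglyMeasurable (by fun_prop))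
  · intro ξ
    exact ae_of_all _ fun x => by rw [norm_mul, aux18_norm_exp_mul]; simp
  · exact hf.norm
  · exact ae_of_all _ fun x => by fun_prop

lemma aux18_ft_norm_le (f : ℝ → ℂ) (ξ : ℝ) : ‖ftransform f ξ‖ ≤ ∫ x, ‖f x‖ := by
  refine (norm_integral_le_integral_norm _).trans (le_of_eq ?_)
  refine integral_congr_ae (ae_of_all _ fun x => ?_)
  show ‖f x * Complex.exp (-(Complex.I) * x * ξ)‖ = ‖f x‖
  rw [norm_mul, aux18_norm_exp_mul, mul_one]

lemma aux18_ft_eq {σ : ℝ → ℝ} (h1 : Integrable (fun x => (σ x:ℂ)) volume)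
    (h2 : Integrable (fun x => x * σ x) volume)
    (hm0 : (∫ x : ℝ, σ x) = 0) (hm1 : (∫ x : ℝ, x * σ x) = 0) (ξ : ℝ) :
    ftransform (fun x => (σ x:ℂ)) ξ =
      ∫ x : ℝ, (σ x:ℂ) * (Complex.exp (-(Complex.I)*x*ξ) - 1 + Complex.I*x*ξ) := by
  have e_int : Integrable (fun x : ℝ => (σ x:ℂ) * Complex.exp (-(Complex.I)*x*ξ)) volume := by
    refine (Integrable.bdd_mul h1 (Continuous.aestronglyMeasurable (by fun_prop))
      (c := 1) (ae_of_all _ fun x => le_of_eq (aux18_norm_exp_mul x ξ))).congr (ae_of_all _ fun x => mul_comm _ _)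
  have hcoe : Integrable (fun x : ℝ => ((x * σ x : ℝ) : ℂ)) volume := h2.ofReal
  have i_int : Integrable (fun x : ℝ => (σ x:ℂ) * (Complex.I*x*ξ)) volume := by
    refine ((hcoe.const_mul (Complex.I*ξ)).congr (ae_of_all _ fun x => ?_))
    show Complex.I*ξ * ((x * σ x : ℝ) : ℂ) = (σ x:ℂ) * (Complex.I*x*ξ)
    push_cast; ring
  have key : (fun x : ℝ => (σ x:ℂ) * (Complex.exp (-(Complex.I)*x*ξ) - 1 + Complex.I*x*ξ))
      = fun x : ℝ => ((σ x:ℂ) * Complex.exp (-(Complex.I)*x*ξ) - (σ x:ℂ))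
          + (σ x:ℂ) * (Complex.I*x*ξ) := by
    funext x; ring
  have es : Integrable (fun x : ℝ => (σ x:ℂ) * Complex.exp (-(Complex.I)*x*ξ) - (σ x:ℂ))
      volume := e_int.sub h1
  rw [key, integral_add es i_int, integral_sub e_int h1]
  have hz0 : (∫ x : ℝ, (σ x : ℂ)) = 0 := by
    have heq : (∫ x : ℝ, (σ x : ℂ)) = ((∫ x : ℝ, σ x : ℝ) : ℂ) := integral_ofReal
    rw [heq, hm0, Complex.ofReal_zero]
  have hz1 : (∫ x : ℝ, (σ x:ℂ) * (Complex.I*x*ξ)) = 0 := by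
    have heq : (fun x : ℝ => (σ x:ℂ) * (Complex.I*x*ξ))
        = fun x : ℝ => (Complex.I*ξ) • ((x * σ x : ℝ):ℂ) := by
      funext x; push_cast; simp [smul_eq_mul]; ring
    have h2' : (∫ x : ℝ, ((x * σ x : ℝ) : ℂ)) = ((∫ x : ℝ, x * σ x : ℝ) : ℂ) := integral_ofReal
    rw [heq, integral_smul, h2', hm1, Complex.ofReal_zero, smul_zero]
  rw [hz0, hz1, sub_zero, add_zero]
  rfl

lemma aux18_ft_bound2 {σ : ℝ → ℝ} (h1 : Integrable (fun x => (σ x:ℂ)) volume)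
    (h2 : Integrable (fun x => x * σ x) volume)
    (hx2 : Integrable (fun x => x ^ 2 * |σ x|) volume)
    (hm0 : (∫ x : ℝ, σ x) = 0) (hm1 : (∫ x : ℝ, x * σ x) = 0) (ξ : ℝ) :
    ‖ftransform (fun x => (σ x:ℂ)) ξ‖ ≤ 3 * ξ ^ 2 * ∫ x : ℝ, x ^ 2 * |σ x| := by
  rw [aux18_ft_eq h1 h2 hm0 hm1 ξ]
  refine (norm_integral_le_integral_norm _).trans ?_
  have hmono : ∀ x : ℝ, ‖(σ x:ℂ) * (Complex.exp (-(Complex.I)*x*ξ) - 1 + Complex.I*x*ξ)‖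
      ≤ 3 * ξ ^ 2 * (x ^ 2 * |σ x|) := by
    intro x
    rw [norm_mul]
    have harg : Complex.exp (-(Complex.I)*x*ξ) - 1 + Complex.I*x*ξ
        = Complex.exp (-(Complex.I)*((x*ξ:ℝ):ℂ)) - 1 + Complex.I*((x*ξ:ℝ):ℂ) := by
      push_cast; ring
    have hn : ‖(σ x : ℂ)‖ = |σ x| := by rw [Complex.norm_real, Real.norm_eq_abs]
    rw [harg, hn]
    calc |σ x| * ‖Complex.exp (-(Complex.I)*((x*ξ:ℝ):ℂ)) - 1 + Complex.I*((x*ξ:ℝ):ℂ)‖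
        ≤ |σ x| * (3 * (x*ξ) ^ 2) :=
          mul_le_mul_of_nonneg_left (aux18_exp_taylor2 (x*ξ)) (abs_nonneg _)
      _ = 3 * ξ ^ 2 * (x ^ 2 * |σ x|) := by ring
  refine (integral_mono_of_nonneg (ae_of_all _ fun x => norm_nonneg _)
    (hx2.const_mul (3 * ξ ^ 2)) (ae_of_all _ hmono)).trans (le_of_eq ?_)
  exact integral_const_mul _ _

lemma aux18_int_mul {f g : ℝ → ℝ} (hf : MemLp f 2 volume) (hg : MemLp g 2 volume) :
    Integrable (fun x => f x * g x) volume := by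
  have h : (1 : ℝ≥0∞) / 1 = 1 / 2 + 1 / 2 := by
    rw [ENNReal.div_add_div_same]; norm_num
    rw [eq_comm, ENNReal.div_eq_one_iff (by norm_num) (by norm_num)]
  exact memLp_one_iff_integrable.mp (hg.smul hf)

lemma aux18_holder2 {f g : ℝ → ℝ} (hf : MemLp f 2 volume) (hg : MemLp g 2 volume)
    (hf0 : ∀ x, 0 ≤ f x) (hg0 : ∀ x, 0 ≤ g x) :
    ∫ x, f x * g x ≤ (∫ x, f x ^ (2:ℝ)) ^ ((1:ℝ)/2) * (∫ x, g x ^ (2:ℝ)) ^ ((1:ℝ)/2) := by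
  have h2 : ENNReal.ofReal (2:ℝ) = 2 := by norm_num
  exact integral_mul_le_Lp_mul_Lq_of_nonneg Real.HolderConjugate.two_two
    (ae_of_all _ hf0) (ae_of_all _ hg0) (h2 ▸ hf) (h2 ▸ hg)

lemma aux18_weight (k : ℕ) (hk : k ≤ 2) :
    MemLp (fun x : ℝ => x ^ k / jweight 3 x) 2 volume ∧
    (∫ x : ℝ, (x ^ k / jweight 3 x) ^ (2:ℝ)) ≤ Real.pi := by
  have hpos : ∀ x : ℝ, (0:ℝ) < 1 + x ^ 2 := fun x => by positivity
  have hcont : Continuous fun x : ℝ => x ^ k / jweight 3 x := by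
    apply (continuous_pow k).div
      ((continuous_const.add (continuous_pow 2)).rpow_const fun x => Or.inr (by norm_num))
    exact fun x => ne_of_gt (Real.rpow_pos_of_pos (hpos x) _)
  have hval : ∀ x : ℝ, (x ^ k / jweight 3 x) ^ 2 ≤ (1 + x ^ 2)⁻¹ := by
    intro x
    have hq2 : (jweight 3 x) ^ 2 = (1 + x ^ 2) ^ (3:ℕ) := by
      show (((1 + x ^ 2):ℝ) ^ ((3:ℝ)/2)) ^ 2 = (1 + x ^ 2) ^ (3:ℕ)
      rw [← Real.rpow_natCast ((1 + x ^ 2) ^ ((3:ℝ)/2)) 2, ← Real.rpow_mul (hpos x).le,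
        ← Real.rpow_natCast (1 + x ^ 2) 3]
      norm_num
    have hnum : (x ^ k) ^ 2 ≤ (1 + x ^ 2) ^ 2 := by
      have h1 : (x ^ k) ^ 2 = (x ^ 2) ^ k := by ring
      have h2 : (x ^ 2) ^ k ≤ (1 + x ^ 2) ^ k :=
        pow_le_pow_left₀ (sq_nonneg x) (by nlinarith [sq_nonneg x]) k
      have h3 : (1 + x ^ 2) ^ k ≤ (1 + x ^ 2) ^ 2 :=
        pow_le_pow_right₀ (by nlinarith [sq_nonneg x]) hk
      linarith [h1 ▸ h2]
    rw [div_pow, hq2]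
    calc (x ^ k) ^ 2 / (1 + x ^ 2) ^ (3:ℕ)
        ≤ (1 + x ^ 2) ^ 2 / (1 + x ^ 2) ^ (3:ℕ) :=
          div_le_div_of_nonneg_right hnum (by positivity) |> fun h => h
      _ = (1 + x ^ 2)⁻¹ := by
          rw [show ((1 + x ^ 2):ℝ) ^ (3:ℕ) = (1 + x ^ 2) ^ 2 * (1 + x ^ 2) by ring,
            div_mul_eq_div_div, div_self (by positivity), one_div]
  have hmem : MemLp (fun x : ℝ => x ^ k / jweight 3 x) 2 volume := by
    rw [memLp_two_iff_integrable_sq hcont.aestronglyMeasurable]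
    apply Integrable.mono' integrable_inv_one_add_sq (hcont.pow 2).aestronglyMeasurable
    exact ae_of_all _ fun x => by
      rw [Real.norm_eq_abs, Pi.pow_apply, _root_.abs_of_nonneg (by positivity)]; exact hval x
  refine ⟨hmem, ?_⟩
  have hint : Integrable (fun x : ℝ => (x ^ k / jweight 3 x) ^ 2) volume :=
    (memLp_two_iff_integrable_sq hcont.aestronglyMeasurable).mp hmem
  have hconv : (∫ x : ℝ, (x ^ k / jweight 3 x) ^ (2:ℝ))
      = ∫ x : ℝ, (x ^ k / jweight 3 x) ^ (2:ℕ) := by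
    simp_rw [show ((2:ℝ)) = ((2:ℕ):ℝ) by norm_num, Real.rpow_natCast]
  rw [hconv]
  calc (∫ x : ℝ, (x ^ k / jweight 3 x) ^ (2:ℕ))
      ≤ ∫ x : ℝ, (1 + x ^ 2)⁻¹ := integral_mono hint integrable_inv_one_add_sq hval
    _ = Real.pi := integral_univ_inv_one_add_sq

set_option maxHeartbeats 2000000 in
/-- estimate \eqref{C1}: for `a ∈ (0,1)` there is `C > 0` such that for every
real `σ` with `⟨x⟩³ σ ∈ L²`, zero mean and zero first moment, the function
`ξ ↦ |ξ|^{a-2} σ̂(ξ)` is in `L²(ℝ)` with `‖|ξ|^{a-2} σ̂‖_{L²} ≤ C ‖⟨x⟩³ σ‖_{L²}`. -/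
theorem abs_pow_neg_ftransform_estimate (a : ℝ) (ha : a ∈ Set.Ioo (0:ℝ) 1) :
    ∃ C : ℝ, 0 < C ∧ ∀ σ : ℝ → ℝ,
      MemLp (fun x : ℝ => jweight 3 x * σ x) 2 volume →
      (∫ x : ℝ, σ x) = 0 →
      (∫ x : ℝ, x * σ x) = 0 →
      MemLp (fun ξ : ℝ =>
          ((|ξ| ^ (a - 2) : ℝ) : ℂ) * ftransform (fun x : ℝ => (σ x : ℂ)) ξ) 2 volume ∧
      eLpNorm (fun ξ : ℝ =>
          ((|ξ| ^ (a - 2) : ℝ) : ℂ) * ftransform (fun x : ℝ => (σ x : ℂ)) ξ) 2 volume ≤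
        ENNReal.ofReal C * eLpNorm (fun x : ℝ => jweight 3 x * σ x) 2 volume := by
  obtain ⟨ha0, ha1⟩ := ha
  refine ⟨8 * Real.pi, by positivity, ?_⟩
  intro σ hσ hm0 hm1
  have hqpos : ∀ x : ℝ, 0 < jweight 3 x := fun x => Real.rpow_pos_of_pos (by positivity) _
  set h : ℝ → ℝ := fun x => jweight 3 x * σ x with hh
  obtain ⟨hw0mem, hw0int⟩ := aux18_weight 0 (by norm_num)
  obtain ⟨hw1mem, -⟩ := aux18_weight 1 (by norm_num)
  obtain ⟨hw2mem, hw2int⟩ := aux18_weight 2 (by norm_num)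
  -- integrability of moments
  have hσr : Integrable σ volume := by
    refine (aux18_int_mul hw0mem hσ).congr (ae_of_all _ fun x => ?_)
    show x ^ 0 / jweight 3 x * (jweight 3 x * σ x) = σ x
    have := (hqpos x).ne'
    field_simp
  have hxσ : Integrable (fun x : ℝ => x * σ x) volume := by
    refine (aux18_int_mul hw1mem hσ).congr (ae_of_all _ fun x => ?_)
    show x ^ 1 / jweight 3 x * (jweight 3 x * σ x) = x * σ x
    have := (hqpos x).ne'
    field_simp
  have hx2σ : Integrable (fun x : ℝ => x ^ 2 * σ x) volume := by
    refine (aux18_int_mul hw2mem hσ).congr (ae_of_all _ fun x => ?_)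
    show x ^ 2 / jweight 3 x * (jweight 3 x * σ x) = x ^ 2 * σ x
    have := (hqpos x).ne'
    field_simp
  have hx2abs : Integrable (fun x : ℝ => x ^ 2 * |σ x|) volume := by
    refine hx2σ.abs.congr (ae_of_all _ fun x => ?_)
    show |x ^ 2 * σ x| = x ^ 2 * |σ x|
    rw [abs_mul, _root_.abs_of_nonneg (sq_nonneg x)]
  have hσℂ : Integrable (fun x : ℝ => (σ x : ℂ)) volume := hσr.ofReal
  -- Cauchy–Schwarz bounds for the moments
  set K : ℝ := (∫ x : ℝ, |h x| ^ (2:ℝ)) ^ ((1:ℝ)/2) with hKdef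
  have habs : MemLp (fun x : ℝ => |h x|) 2 volume := hσ.norm
  have hKnn : 0 ≤ K :=
    Real.rpow_nonneg (integral_nonneg fun x => Real.rpow_nonneg (abs_nonneg _) _) _
  set sp : ℝ := Real.pi ^ ((1:ℝ)/2) with hspdef
  have hspnn : 0 ≤ sp := Real.rpow_nonneg Real.pi_pos.le _
  have hsp2 : sp * sp = Real.pi := by
    rw [hspdef, ← Real.rpow_add Real.pi_pos]; norm_num
  have hmom : ∀ k : ℕ, (∀ x : ℝ, (0:ℝ) ≤ x ^ k) →
      MemLp (fun x : ℝ => x ^ k / jweight 3 x) 2 volume →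
      (∫ x : ℝ, (x ^ k / jweight 3 x) ^ (2:ℝ)) ≤ Real.pi →
      (∫ x : ℝ, x ^ k * |σ x|) ≤ sp * K := by
    intro k hknn hmemk hintk
    have hcongr : (∫ x : ℝ, x ^ k * |σ x|)
        = ∫ x : ℝ, (x ^ k / jweight 3 x) * |h x| := by
      refine integral_congr_ae (ae_of_all _ fun x => ?_)
      show x ^ k * |σ x| = x ^ k / jweight 3 x * |jweight 3 x * σ x|
      rw [abs_mul, _root_.abs_of_pos (hqpos x)]
      have := (hqpos x).ne'
      field_simp
    rw [hcongr]
    refine (aux18_holder2 hmemk habs (fun x => div_nonneg (hknn x) (hqpos x).le)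
      (fun x => abs_nonneg _)).trans ?_
    rw [← hKdef]
    refine mul_le_mul_of_nonneg_right ?_ hKnn
    rw [hspdef]
    refine Real.rpow_le_rpow (integral_nonneg fun x => ?_) hintk (by norm_num)
    exact Real.rpow_nonneg (div_nonneg (hknn x) (hqpos x).le) _
  set I0 : ℝ := ∫ x : ℝ, |σ x| with hI0def
  set I2 : ℝ := ∫ x : ℝ, x ^ 2 * |σ x| with hI2def
  have hI0nn : 0 ≤ I0 := integral_nonneg fun x => abs_nonneg _
  have hI2nn : 0 ≤ I2 := integral_nonneg fun x => mul_nonneg (sq_nonneg x) (abs_nonneg _)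
  have hI0 : I0 ≤ sp * K := by
    have hcongr : I0 = ∫ x : ℝ, x ^ 0 * |σ x| := by
      rw [hI0def]; exact integral_congr_ae (ae_of_all _ fun x => by simp)
    rw [hcongr]
    exact hmom 0 (fun x => by norm_num) hw0mem hw0int
  have hI2 : I2 ≤ sp * K :=
    hmom 2 (fun x => sq_nonneg x) hw2mem hw2int
  -- bounds on the Fourier transform
  have hb0 : ∀ ξ : ℝ, ‖ftransform (fun x : ℝ => (σ x:ℂ)) ξ‖ ≤ I0 := by
    intro ξ
    refine (aux18_ft_norm_le _ ξ).trans (le_of_eq ?_)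
    refine integral_congr_ae (ae_of_all _ fun x => ?_)
    show ‖(σ x : ℂ)‖ = |σ x|
    rw [Complex.norm_real, Real.norm_eq_abs]
  have hb2 : ∀ ξ : ℝ, ‖ftransform (fun x : ℝ => (σ x:ℂ)) ξ‖ ≤ 3 * ξ ^ 2 * I2 :=
    fun ξ => aux18_ft_bound2 hσℂ hxσ hx2abs hm0 hm1 ξ
  -- the comparison function g
  set g : ℝ → ℝ := fun ξ => (1 + ξ ^ 2) ^ ((a-2)/2) with hgdef
  have hgcont : Continuous g :=
    (continuous_const.add (continuous_pow 2)).rpow_const fun x => Or.inl (show (1:ℝ) + x ^ 2 ≠ 0 by positivity)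
  have hgpos : ∀ ξ, 0 < g ξ := fun ξ => Real.rpow_pos_of_pos (by positivity) _
  have hgsq : ∀ ξ : ℝ, g ξ ^ 2 ≤ (1 + ξ^2)⁻¹ := by
    intro ξ
    have h1 : g ξ ^ 2 = (1 + ξ^2) ^ (a-2) := by
      show (((1 + ξ^2):ℝ) ^ ((a-2)/2)) ^ 2 = (1 + ξ^2) ^ (a-2)
      rw [← Real.rpow_natCast (((1 + ξ^2):ℝ) ^ ((a-2)/2)) 2, ← Real.rpow_mul (by positivity)]
      norm_num
    have h2 : (1 + ξ^2 : ℝ) ^ (a-2) ≤ (1 + ξ^2) ^ (-1:ℝ) :=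
      Real.rpow_le_rpow_of_exponent_le (by nlinarith [sq_nonneg ξ]) (by linarith)
    rw [h1]
    exact h2.trans (le_of_eq (Real.rpow_neg_one _))
  have hgmem : MemLp g 2 volume := by
    rw [memLp_two_iff_integrable_sq hgcont.aestronglyMeasurable]
    apply Integrable.mono' integrable_inv_one_add_sq (hgcont.pow 2).aestronglyMeasurable
    refine ae_of_all _ fun ξ => ?_
    rw [Real.norm_eq_abs, Pi.pow_apply, _root_.abs_of_nonneg (pow_nonneg (hgpos ξ).le 2)]
    exact hgsq ξ
  have hgL2 : eLpNorm g 2 volume ≤ ENNReal.ofReal sp := by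
    rw [hgmem.eLpNorm_eq_integral_rpow_norm (by norm_num) (by norm_num)]
    apply ENNReal.ofReal_le_ofReal
    have hb : (∫ ξ : ℝ, ‖g ξ‖ ^ ((2:ℝ≥0∞).toReal)) ≤ Real.pi := by
      have hconv : (∫ ξ : ℝ, ‖g ξ‖ ^ ((2:ℝ≥0∞).toReal)) = ∫ ξ : ℝ, g ξ ^ (2:ℕ) := by
        refine integral_congr_ae (ae_of_all _ fun ξ => ?_)
        show ‖g ξ‖ ^ ((2:ℝ≥0∞).toReal) = g ξ ^ (2:ℕ)
        rw [Real.norm_eq_abs, _root_.abs_of_nonneg (hgpos ξ).le,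
          show ((2:ℝ≥0∞).toReal) = ((2:ℕ):ℝ) by norm_num, Real.rpow_natCast]
      rw [hconv]
      calc (∫ ξ : ℝ, g ξ ^ (2:ℕ))
          ≤ ∫ ξ : ℝ, (1+ξ^2)⁻¹ :=
            integral_mono ((memLp_two_iff_integrable_sq hgcont.aestronglyMeasurable).mp hgmem)
              integrable_inv_one_add_sq hgsq
        _ = Real.pi := integral_univ_inv_one_add_sq
    calc (∫ ξ : ℝ, ‖g ξ‖ ^ ((2:ℝ≥0∞).toReal)) ^ (((2:ℝ≥0∞).toReal)⁻¹)
        ≤ Real.pi ^ (((2:ℝ≥0∞).toReal)⁻¹) :=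
          Real.rpow_le_rpow (integral_nonneg fun ξ => Real.rpow_nonneg (norm_nonneg _) _) hb
            (by norm_num)
      _ = sp := by rw [hspdef]; norm_num
  have hK : eLpNorm h 2 volume = ENNReal.ofReal K := by
    rw [hσ.eLpNorm_eq_integral_rpow_norm (by norm_num) (by norm_num)]
    congr 1
    rw [hKdef]
    norm_num [Real.norm_eq_abs]
  -- numeric constant
  set c0 : ℝ := 6 * I2 + 2 * I0 with hc0def
  have hc0nn : 0 ≤ c0 := by rw [hc0def]; linarith
  have e3 : (1:ℝ)/2 ≤ (2:ℝ)^((a-2)/2) := by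
    have := Real.rpow_le_rpow_of_exponent_le (x := (2:ℝ)) one_le_two
      (y := (-1:ℝ)) (z := (a-2)/2) (by linarith)
    rwa [Real.rpow_neg_one, ← one_div] at this
  -- the pointwise bound
  have hpoint : ∀ ξ : ℝ,
      ‖((|ξ| ^ (a - 2) : ℝ) : ℂ) * ftransform (fun x : ℝ => (σ x : ℂ)) ξ‖ ≤ c0 * g ξ := by
    intro ξ
    have hrnn : 0 ≤ |ξ| ^ (a-2) := Real.rpow_nonneg (abs_nonneg ξ) _
    have hnF : ‖((|ξ| ^ (a - 2) : ℝ) : ℂ) * ftransform (fun x : ℝ => (σ x : ℂ)) ξ‖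
        = |ξ| ^ (a-2) * ‖ftransform (fun x : ℝ => (σ x:ℂ)) ξ‖ := by
      rw [norm_mul, Complex.norm_real, Real.norm_eq_abs, _root_.abs_of_nonneg hrnn]
    rcases le_or_gt |ξ| 1 with hle | hgt
    · have hgl : (1:ℝ)/2 ≤ g ξ := by
        have h2 : (1 + ξ^2 : ℝ) ≤ 2 := by nlinarith [_root_.sq_abs ξ, abs_nonneg ξ]
        have e1 : (2:ℝ) ^ ((a-2)/2) ≤ (1+ξ^2) ^ ((a-2)/2) :=
          Real.rpow_le_rpow_of_nonpos (by positivity) h2 (by linarith)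
        exact e3.trans e1
      have hsmall : |ξ|^(a-2) * ξ^2 ≤ 1 := by
        rcases eq_or_ne ξ 0 with h0 | h0
        · simp [h0]
        · have habsp : 0 < |ξ| := abs_pos.mpr h0
          have heq : |ξ|^(a-2) * ξ^2 = |ξ|^a := by
            rw [← _root_.sq_abs ξ, ← Real.rpow_natCast |ξ| 2, ← Real.rpow_add habsp]
            norm_num
          rw [heq]
          exact Real.rpow_le_one (abs_nonneg ξ) hle ha0.le
      have hFa : ‖((|ξ| ^ (a - 2) : ℝ) : ℂ) * ftransform (fun x : ℝ => (σ x : ℂ)) ξ‖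
          ≤ 3 * I2 := by
        rw [hnF]
        calc |ξ|^(a-2) * ‖ftransform (fun x : ℝ => (σ x:ℂ)) ξ‖
            ≤ |ξ|^(a-2) * (3*ξ^2*I2) := mul_le_mul_of_nonneg_left (hb2 ξ) hrnn
          _ = 3 * (|ξ|^(a-2) * ξ^2) * I2 := by ring
          _ ≤ 3 * 1 * I2 := by
              refine mul_le_mul_of_nonneg_right ?_ hI2nn
              nlinarith [hsmall]
          _ = 3 * I2 := by ring
      refine hFa.trans ?_
      rw [hc0def]
      calc 3 * I2 = 6 * I2 * (1/2) := by ring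
        _ ≤ 6 * I2 * g ξ :=
            mul_le_mul_of_nonneg_left hgl (by linarith)
        _ ≤ 6 * I2 * g ξ + 2 * I0 * g ξ :=
            le_add_of_nonneg_right (mul_nonneg (by linarith) (hgpos ξ).le)
        _ = (6 * I2 + 2 * I0) * g ξ := by ring
    · have hgl : (1/2:ℝ) * |ξ|^(a-2) ≤ g ξ := by
        have h2 : (1 + ξ^2 : ℝ) ≤ 2*ξ^2 := by nlinarith [_root_.sq_abs ξ]
        have e1 : ((2*ξ^2:ℝ)) ^ ((a-2)/2) ≤ (1+ξ^2) ^ ((a-2)/2) :=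
          Real.rpow_le_rpow_of_nonpos (by positivity) h2 (by linarith)
        have e2 : ((2*ξ^2:ℝ)) ^ ((a-2)/2) = 2 ^ ((a-2)/2) * |ξ|^(a-2) := by
          rw [Real.mul_rpow (by norm_num) (sq_nonneg ξ), ← _root_.sq_abs ξ,
            ← Real.rpow_natCast |ξ| 2, ← Real.rpow_mul (abs_nonneg ξ),
            show ((2:ℕ):ℝ) * ((a-2)/2) = a-2 by push_cast; ring]
        calc (1/2:ℝ) * |ξ|^(a-2) ≤ 2^((a-2)/2) * |ξ|^(a-2) :=
              mul_le_mul_of_nonneg_right e3 hrnn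
          _ = ((2*ξ^2:ℝ)) ^ ((a-2)/2) := e2.symm
          _ ≤ g ξ := e1
      rw [hnF]
      refine (mul_le_mul_of_nonneg_left (hb0 ξ) hrnn).trans ?_
      rw [hc0def]
      calc |ξ| ^ (a-2) * I0 = 2 * I0 * ((1/2) * |ξ| ^ (a-2)) := by ring
        _ ≤ 2 * I0 * g ξ := mul_le_mul_of_nonneg_left hgl (by linarith)
        _ ≤ 6 * I2 * g ξ + 2 * I0 * g ξ :=
            le_add_of_nonneg_left (mul_nonneg (by linarith) (hgpos ξ).le)
        _ = (6 * I2 + 2 * I0) * g ξ := by ring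
  -- measurability and membership
  have hFmeas : AEStronglyMeasurable
      (fun ξ : ℝ => ((|ξ| ^ (a - 2) : ℝ) : ℂ) * ftransform (fun x : ℝ => (σ x : ℂ)) ξ)
      volume := by
    have hm : Measurable fun ξ : ℝ => |ξ| ^ (a-2) := by measurability
    exact ((Complex.measurable_ofReal.comp hm).mul
      (aux18_ft_continuous hσℂ).measurable).aestronglyMeasurable
  have hB : MemLp (fun ξ : ℝ => c0 * g ξ) 2 volume := hgmem.const_mul c0
  have hFmem : MemLp
      (fun ξ : ℝ => ((|ξ| ^ (a - 2) : ℝ) : ℂ) * ftransform (fun x : ℝ => (σ x : ℂ)) ξ)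
      2 volume := by
    refine hB.of_le hFmeas (ae_of_all _ fun ξ => ?_)
    rw [Real.norm_eq_abs, _root_.abs_of_nonneg (mul_nonneg hc0nn (hgpos ξ).le)]
    exact hpoint ξ
  refine ⟨hFmem, ?_⟩
  calc eLpNorm (fun ξ : ℝ => ((|ξ| ^ (a - 2) : ℝ) : ℂ)
          * ftransform (fun x : ℝ => (σ x : ℂ)) ξ) 2 volume
      ≤ eLpNorm (fun ξ : ℝ => c0 * g ξ) 2 volume := eLpNorm_mono_real hpoint
    _ = (‖c0‖₊ : ℝ≥0∞) * eLpNorm g 2 volume := by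
        rw [show (fun ξ : ℝ => c0 * g ξ) = c0 • g from rfl, eLpNorm_const_smul]; rfl
    _ = ENNReal.ofReal c0 * eLpNorm g 2 volume := by rw [← Real.enorm_eq_ofReal hc0nn]; rfl
    _ ≤ ENNReal.ofReal (8 * (sp * K)) * ENNReal.ofReal sp := by
        refine mul_le_mul' (ENNReal.ofReal_le_ofReal ?_) hgL2
        rw [hc0def]; linarith
    _ = ENNReal.ofReal (8 * Real.pi) * ENNReal.ofReal K := by
        rw [← ENNReal.ofReal_mul (by positivity), ← ENNReal.ofReal_mul (by positivity)]
        congr 1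
        calc 8 * (sp * K) * sp = 8 * (sp * sp) * K := by ring
          _ = 8 * Real.pi * K := by rw [hsp2]
    _ = ENNReal.ofReal (8 * Real.pi) * eLpNorm h 2 volume := by rw [hK]
end
end
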